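/- For every cycle c on a finite connected graph H, there exists a cactus forest (C_1, ..., C_k) of depth at most |V_H| that encodes c. -/

import Mathlib

/-- An undirected graph (self-loops allowed) given by a symmetric adjacency relation. -/
structure LGraph (V : Type*) where
  Adj : V → V → Prop
  symm : ∀ {a b : V}, Adj a b → Adj b a

/-- A walk on `G`: a nonempty list of vertices with consecutive vertices adjacent. -/
def IsWalkL {V : Type*} (G : LGraph V) (p : List V) : Prop :=
  p ≠ [] ∧ p.Chain' G.Adj

/-- A cycle on `G`: a walk with equal endpoints. -/
def IsCycleL {V : Type*} (G : LGraph V) (p : List V) : Prop :=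
  IsWalkL G p ∧ p.head? = p.getLast?

/-- A simple cycle: repetitions occur only at the two endpoints. -/
def IsSimpleCycleL {V : Type*} (G : LGraph V) (p : List V) : Prop :=
  IsCycleL G p ∧
  ∀ i j : ℕ, i < j → j < p.length → p[i]? = p[j]? → i = 0 ∧ j = p.length - 1

/-- `G` is connected. -/
def LGraph.ConnectedL {V : Type*} (G : LGraph V) : Prop :=
  ∀ u v : V, ∃ p : List V, IsWalkL G p ∧ p.head? = some u ∧ p.getLast? = some v

/-- `c ⊕_k s`: insert the cycle `s` into the walk `c` at position `k`. -/
def oplus {V : Type*} (c : List V) (k : ℕ) (s : List V) : List V :=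
  c.take k ++ s ++ c.drop (k + 1)

/-- A cactus: a rooted finite ordered tree whose vertices are labeled by
(simple) cycles, each child being attached at an index of its parent's cycle. -/
inductive Cactus (V : Type u) : Type u where
  | mk : List V → List (ℕ × Cactus V) → Cactus V

namespace Cactus

/-- The root cycle of a cactus. -/
def rootCycle {V : Type u} : Cactus V → List V
  | .mk ξ _ => ξ

/-- The starting vertex of the root cycle. -/
def root {V : Type u} (C : Cactus V) : Option V :=
  C.rootCycle.head?

mutual
/-- The depth of a cactus (a leaf has depth 1). -/
def depth {V : Type u} : Cactus V → ℕ
  | .mk _ children => 1 + depthList children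

def depthList {V : Type u} : List (ℕ × Cactus V) → ℕ
  | [] => 0
  | (_, c) :: rest => max (depth c) (depthList rest)
end

mutual
/-- The cycle `π(C)` encoded by a cactus: recursively insert the cycles encoded
by the children into the root cycle at the prescribed positions (with
cumulative index shifts). -/
def encode {V : Type u} : Cactus V → List V
  | .mk ξ children => insertAll ξ 0 children

def insertAll {V : Type u} : List V → ℕ → List (ℕ × Cactus V) → List V
  | ξ, _, [] => ξ
  | ξ, sh, (k, c) :: rest =>
      insertAll (oplus ξ (k + sh) (encode c)) (sh + ((encode c).length - 1)) rest
end

end Cactus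

/-- Validity of a cactus over `G`: the root is a simple cycle of `G`, the
attachment indices are nondecreasing and within range, each child's root
cycle starts at the corresponding vertex of the parent cycle, and all
children are valid. -/
inductive CValid {V : Type*} (G : LGraph V) : Cactus V → Prop
  | mk (ξ : List V) (children : List (ℕ × Cactus V))
      (hξ : IsSimpleCycleL G ξ)
      (hmono : List.Chain' (· ≤ ·) (children.map Prod.fst))
      (hrange : ∀ kc ∈ children, kc.1 < ξ.length)
      (hroot : ∀ kc ∈ children, kc.2.root = ξ[kc.1]?)
      (hvalid : ∀ kc ∈ children, CValid G kc.2) :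
      CValid G (.mk ξ children)

/-- Concatenation `p ⊙ q` of walks with matching endpoints. -/
def odot {V : Type*} (p q : List V) : List V := p ++ q.tail

/-- The cycle encoded by a cactus forest: the `⊙`-concatenation of the cycles
encoded by its cacti. -/
def forestEncode {V : Type*} : List (List V) → List V
  | [] => []
  | h :: t => t.foldl odot h

section Aux

variable {V : Type*}

lemma insertAll_nil (ξ : List V) (sh : ℕ) :
    Cactus.insertAll ξ sh ([] : List (ℕ × Cactus V)) = ξ := by
  rw [Cactus.insertAll]

lemma insertAll_cons (ξ : List V) (sh k : ℕ) (c : Cactus V) (rest : List (ℕ × Cactus V)) :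
    Cactus.insertAll ξ sh ((k, c) :: rest) =
      Cactus.insertAll (oplus ξ (k + sh) (Cactus.encode c))
        (sh + ((Cactus.encode c).length - 1)) rest := by
  rw [Cactus.insertAll]

lemma encode_mk (ξ : List V) (ch : List (ℕ × Cactus V)) :
    Cactus.encode (.mk ξ ch) = Cactus.insertAll ξ 0 ch := by
  rw [Cactus.encode]

lemma depth_mk (ξ : List V) (ch : List (ℕ × Cactus V)) :
    Cactus.depth (.mk ξ ch) = 1 + Cactus.depthList ch := by
  rw [Cactus.depth]

lemma depthList_nil : Cactus.depthList ([] : List (ℕ × Cactus V)) = 0 := by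
  rw [Cactus.depthList]

lemma depthList_cons (k : ℕ) (c : Cactus V) (rest : List (ℕ × Cactus V)) :
    Cactus.depthList ((k, c) :: rest) = max (Cactus.depth c) (Cactus.depthList rest) := by
  rw [Cactus.depthList]

lemma depthList_le (m : ℕ) : ∀ ch : List (ℕ × Cactus V),
    (∀ kc ∈ ch, Cactus.depth kc.2 ≤ m) → Cactus.depthList ch ≤ m := by
  intro ch
  induction ch with
  | nil => intro _; rw [depthList_nil]; omega
  | cons kc rest ih =>
    intro h
    obtain ⟨k, c⟩ := kc
    rw [depthList_cons]
    exact max_le (h (k, c) (by simp)) (ih fun x hx => h x (by simp [hx]))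

lemma mem_of_getLast?' {l : List V} {u : V} (h : l.getLast? = some u) : u ∈ l := by
  rw [List.getLast?_eq_head?_reverse] at h
  have := List.mem_of_mem_head? h
  simpa using this

lemma ne_nil_of_getLast?' {l : List V} {u : V} (h : l.getLast? = some u) : l ≠ [] := by
  rintro rfl; simp at h

lemma dropLast_concat_of_getLast? {l : List V} {u : V} (h : l.getLast? = some u) :
    l.dropLast ++ [u] = l := by
  cases l with
  | nil => simp at h
  | cons a t =>
    have h2 := List.dropLast_append_getLast (l := a :: t) (by simp)
    rw [List.getLast?_eq_getLast (by simp), Option.some_inj] at h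
    rw [← h]; exact h2

lemma getLast?_append' (l r : List V) (hr : r ≠ []) : (l ++ r).getLast? = r.getLast? := by
  rw [List.getLast?_append]
  cases hx : r.getLast? with
  | none => exact absurd (List.getLast?_eq_none_iff.mp hx) hr
  | some x => rfl

lemma getLast?_cons' (x : V) (L : List V) (h : L ≠ []) : (x :: L).getLast? = L.getLast? := by
  have := getLast?_append' [x] L h
  simpa using this

lemma head?_eq_nil' {l : List V} (h : l.head? = none) : l = [] := by
  cases l with
  | nil => rfl
  | cons a t => simp at h

lemma odot_ne_nil (p q : List V) (hp : p ≠ []) : odot p q ≠ [] := by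
  cases p with
  | nil => simp at hp
  | cons a t => simp [odot]

lemma odot_head? (p q : List V) (hp : p ≠ []) : (odot p q).head? = p.head? := by
  cases p with
  | nil => simp at hp
  | cons a t => simp [odot]

lemma odot_assoc (a b c : List V) (hb : b ≠ []) : odot (odot a b) c = odot a (odot b c) := by
  cases b with
  | nil => simp at hb
  | cons x t => simp [odot]

lemma foldl_odot (l : List (List V)) : ∀ a b : List V, a ≠ [] → b ≠ [] →
    List.foldl odot (odot a b) l = odot a (List.foldl odot b l) := by
  induction l with
  | nil => intro a b _ _; rfl
  | cons y l ih =>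
    intro a b ha hb
    rw [List.foldl_cons, List.foldl_cons, odot_assoc a b y hb, ih a (odot b y) ha (odot_ne_nil _ _ hb)]

lemma forestEncode_cons (p : List V) (l : List (List V)) (hp : p ≠ []) (hl : ∀ q ∈ l, q ≠ []) :
    forestEncode (p :: l) = odot p (forestEncode l) := by
  cases l with
  | nil => simp [forestEncode, odot]
  | cons q l =>
    show List.foldl odot p (q :: l) = odot p (List.foldl odot q l)
    rw [List.foldl_cons]
    exact foldl_odot l p q hp (hl q (by simp))

lemma forestEncode_ne_nil (l : List (List V)) (hne : l ≠ []) (hl : ∀ q ∈ l, q ≠ []) :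
    forestEncode l ≠ [] := by
  cases l with
  | nil => simp at hne
  | cons p l =>
    rw [forestEncode_cons p l (hl p (by simp)) (fun q hq => hl q (by simp [hq]))]
    exact odot_ne_nil _ _ (hl p (by simp))

lemma forestEncode_head? (p : List V) (l : List (List V)) (hp : p ≠ []) (hl : ∀ q ∈ l, q ≠ []) :
    (forestEncode (p :: l)).head? = p.head? := by
  rw [forestEncode_cons p l hp hl]
  exact odot_head? _ _ hp

lemma odot_getLast? (u : V) (p q : List V) (hp : p.getLast? = some u) (hq : q.getLast? = some u) :
    (odot p q).getLast? = some u := by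
  cases q with
  | nil => simp at hq
  | cons b t =>
    cases t with
    | nil =>
      simp only [List.getLast?_singleton, Option.some_inj] at hq
      show (p ++ ([] : List V)).getLast? = some u
      simpa using hp
    | cons b' t' =>
      show (p ++ (b' :: t')).getLast? = some u
      rw [getLast?_append' p _ (by simp)]
      rwa [getLast?_cons' b _ (by simp)] at hq

lemma forestEncode_getLast? (u : V) : ∀ l : List (List V), l ≠ [] →
    (∀ q ∈ l, q.getLast? = some u) → (forestEncode l).getLast? = some u := by
  intro l
  induction l with
  | nil => simp
  | cons p l ih =>
    intro _ hl
    have hp : p.getLast? = some u := hl p (by simp)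
    have hpne : p ≠ [] := ne_nil_of_getLast?' hp
    cases l with
    | nil => simpa [forestEncode] using hp
    | cons q l' =>
      rw [forestEncode_cons p _ hpne (fun x hx => ne_nil_of_getLast?' (hl x (by simp [hx])))]
      exact odot_getLast? u _ _ hp (ih (by simp) (fun x hx => hl x (by simp [hx])))

lemma oplus_mid (A z s : List V) (x : V) (k : ℕ) (hk : A.length = k) :
    oplus (A ++ x :: z) k s = A ++ s ++ z := by
  subst hk
  unfold oplus
  rw [List.take_left]
  congr 1
  simp [List.drop_append]

lemma chain'_le_const (pos : ℕ) : ∀ l : List (Cactus V),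
    List.Chain' (· ≤ ·) (l.map (fun _ => pos)) := by
  intro l
  induction l with
  | nil => simp [List.Chain']
  | cons a l ih =>
    cases l with
    | nil => simp [List.Chain']
    | cons b l =>
      simp only [List.map_cons] at ih ⊢
      exact List.isChain_cons_cons.mpr ⟨le_rfl, ih⟩

lemma firstSplit (v : V) : ∀ t : List V, v ∈ t → ∃ a t₂, t = a ++ v :: t₂ ∧ v ∉ a := by
  intro t
  induction t with
  | nil => simp
  | cons x t ih =>
    intro h
    by_cases hx : x = v
    · exact ⟨[], t, by simp [hx], by simp⟩
    · have hvt : v ∈ t := by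
        rcases List.mem_cons.mp h with h' | h'
        · exact absurd h'.symm hx
        · exact h'
      obtain ⟨a, t₂, rfl, hva⟩ := ih hvt
      refine ⟨x :: a, t₂, by simp, ?_⟩
      intro hmem
      rcases List.mem_cons.mp hmem with h' | h'
      · exact hx h'.symm
      · exact hva h'

lemma lastSplit (u : V) : ∀ s : List V, u ∈ s →
    ∃ L r, s = L ++ r ∧ L ≠ [] ∧ L.getLast? = some u ∧ u ∉ r := by
  intro s
  induction s with
  | nil => simp
  | cons x s ih =>
    intro h
    by_cases hu : u ∈ s
    · obtain ⟨L, r, rfl, hL, hlast, hur⟩ := ih hu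
      exact ⟨x :: L, r, by simp, by simp, by rw [getLast?_cons' x L hL]; exact hlast, hur⟩
    · have hx : x = u := by
        rcases List.mem_cons.mp h with h' | h'
        · exact h'.symm
        · exact absurd h' hu
      exact ⟨[x], s, by simp, by simp, by simp [hx], hu⟩

lemma xi_get? (v : V) (ξt : List V) (k : ℕ) (h1 : 1 ≤ k) (h2 : k ≤ ξt.length) :
    (v :: ξt ++ [v])[k]? = ξt[k - 1]? := by
  cases k with
  | zero => omega
  | succ k =>
    show ((v :: (ξt ++ [v]))[k + 1]?) = _
    rw [List.getElem?_cons_succ, List.getElem?_append_left (by omega : k < ξt.length)]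
    simp

lemma xi_get?_last (v : V) (ξt : List V) :
    (v :: ξt ++ [v])[ξt.length + 1]? = some v := by
  show ((v :: (ξt ++ [v]))[ξt.length + 1]?) = _
  rw [List.getElem?_cons_succ, List.getElem?_append_right le_rfl]
  simp

lemma simple_mk (H : LGraph V) (v : V) (ξt : List V) (hnd : ξt.Nodup) (hv : v ∉ ξt)
    (hcyc : IsCycleL H (v :: ξt ++ [v])) : IsSimpleCycleL H (v :: ξt ++ [v]) := by
  refine ⟨hcyc, ?_⟩
  intro i j hij hj heq
  have hlen : (v :: ξt ++ [v]).length = ξt.length + 2 := by simp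
  rw [hlen] at hj
  have h0 : (v :: ξt ++ [v])[0]? = some v := rfl
  rcases Nat.eq_zero_or_pos i with rfl | hi
  · rcases (by omega : j = ξt.length + 1 ∨ j ≤ ξt.length) with rfl | hjle
    · exact ⟨rfl, by rw [hlen]; omega⟩
    · exfalso
      rw [h0, xi_get? v ξt j (by omega) hjle] at heq
      exact hv (List.mem_of_getElem? heq.symm)
  · exfalso
    rcases (by omega : j = ξt.length + 1 ∨ j ≤ ξt.length) with rfl | hjle
    · rw [xi_get? v ξt i hi (by omega), xi_get?_last] at heq
      exact hv (List.mem_of_getElem? heq)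
    · rw [xi_get? v ξt i hi (by omega), xi_get? v ξt j (by omega) hjle] at heq
      have := (List.getElem?_inj (by omega : i - 1 < ξt.length) hnd).mp heq
      omega

/-- The inductive property produced by the main construction. -/
def MainProp [DecidableEq V] (H : LGraph V) (c : List V) : Prop :=
  ∃ F : List (Cactus V), F ≠ [] ∧ (∀ C ∈ F, CValid H C) ∧
    (∀ C ∈ F, Cactus.root C = c.head?) ∧
    (∀ C ∈ F, (Cactus.encode C).head? = c.head? ∧ (Cactus.encode C).getLast? = c.head?) ∧
    forestEncode (F.map Cactus.encode) = c ∧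
    (∀ C ∈ F, Cactus.depth C ≤ c.toFinset.card)

lemma ins_forest (u : V) : ∀ F : List (Cactus V), F ≠ [] →
    (∀ C ∈ F, (Cactus.encode C).head? = some u) →
    (∀ C ∈ F, (Cactus.encode C).getLast? = some u) →
    ∀ (rest : List (ℕ × Cactus V)) (A z : List V) (pos sh : ℕ), A.length = pos + sh →
    Cactus.insertAll (A ++ u :: z) sh (F.map (fun C => (pos, C)) ++ rest) =
      Cactus.insertAll (A ++ forestEncode (F.map Cactus.encode) ++ z)
        (sh + ((forestEncode (F.map Cactus.encode)).length - 1)) rest := by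
  intro F
  induction F with
  | nil => intro h; simp at h
  | cons C F' ih =>
    intro _ hh hl rest A z pos sh hA
    have heC : (Cactus.encode C).head? = some u := hh C (by simp)
    have heCl : (Cactus.encode C).getLast? = some u := hl C (by simp)
    have heCne : Cactus.encode C ≠ [] := by
      intro h; rw [h] at heC; simp at heC
    have heC1 : 1 ≤ (Cactus.encode C).length := List.length_pos_iff.mpr heCne
    have step : Cactus.insertAll (A ++ u :: z) sh
        (((C :: F').map (fun C => (pos, C))) ++ rest) =
        Cactus.insertAll (A ++ Cactus.encode C ++ z)
          (sh + ((Cactus.encode C).length - 1)) (F'.map (fun C => (pos, C)) ++ rest) := by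
      simp only [List.map_cons, List.cons_append]
      rw [insertAll_cons, oplus_mid A z (Cactus.encode C) u (pos + sh) hA]
    rw [step]
    cases F' with
    | nil =>
      simp only [List.map_cons, List.map_nil, List.nil_append]
      rfl
    | cons D F'' =>
      have hfene : forestEncode ((D :: F'').map Cactus.encode) ≠ [] := by
        apply forestEncode_ne_nil _ (by simp)
        intro q hq
        simp only [List.mem_map] at hq
        obtain ⟨E, hE, rfl⟩ := hq
        intro h; have := hh E (by simp [hE]); rw [h] at this; simp at this
      have hfeh : (forestEncode ((D :: F'').map Cactus.encode)).head? = some u := by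
        rw [List.map_cons, forestEncode_head? _ _ ?_ ?_]
        · exact hh D (by simp)
        · intro h; have := hh D (by simp); rw [h] at this; simp at this
        · intro q hq
          simp only [List.mem_map] at hq
          obtain ⟨E, hE, rfl⟩ := hq
          intro h; have := hh E (by simp [hE]); rw [h] at this; simp at this
      set fe' := forestEncode ((D :: F'').map Cactus.encode) with hfe'
      have hfe1 : 1 ≤ fe'.length := List.length_pos_iff.mpr hfene
      have hdec : A ++ Cactus.encode C ++ z =
          (A ++ (Cactus.encode C).dropLast) ++ u :: z := by
        conv_lhs => rw [← dropLast_concat_of_getLast? heCl]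
        simp
      rw [hdec]
      rw [ih (by simp) (fun E hE => hh E (by simp [hE])) (fun E hE => hl E (by simp [hE]))
        rest (A ++ (Cactus.encode C).dropLast) z pos (sh + ((Cactus.encode C).length - 1))
        (by simp [List.length_dropLast]; omega)]
      have hfe : forestEncode ((C :: D :: F'').map Cactus.encode) =
          Cactus.encode C ++ fe'.tail := by
        rw [List.map_cons, forestEncode_cons _ _ heCne ?_]
        · rfl
        · intro q hq
          simp only [List.mem_map] at hq
          obtain ⟨E, hE, rfl⟩ := hq
          intro h; have := hh E (by simp [hE]); rw [h] at this; simp at this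
      have hlists : (A ++ (Cactus.encode C).dropLast) ++ fe' ++ z =
          A ++ forestEncode ((C :: D :: F'').map Cactus.encode) ++ z := by
        rw [hfe]
        have : fe' = u :: fe'.tail := by
          cases hx : fe' with
          | nil => exact absurd hx hfene
          | cons a t =>
            rw [hx] at hfeh
            simp only [List.head?_cons, Option.some_inj] at hfeh
            simp [hfeh]
        conv_lhs => rw [this]
        conv_lhs => rw [show A ++ (Cactus.encode C).dropLast ++ (u :: fe'.tail) ++ z
          = A ++ ((Cactus.encode C).dropLast ++ [u]) ++ fe'.tail ++ z by simp]
        rw [dropLast_concat_of_getLast? heCl]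
        simp
      rw [hlists]
      congr 1
      rw [hfe]
      have : fe'.tail.length = fe'.length - 1 := by simp
      simp only [List.length_append, this]
      omega

end Aux
section Core

variable {V : Type*}

lemma gLemma (H : LGraph V) [DecidableEq V] (n : ℕ)
    (hIH : ∀ c : List V, c.length ≤ n → IsCycleL H c → MainProp H c) :
    ∀ (m : ℕ) (s : List V) (pos : ℕ), s.length ≤ m → s.length ≤ n → s.Chain' H.Adj →
    ∃ (ξt : List V) (ch : List (ℕ × Cactus V)),
      (∀ (A z : List V) (sh : ℕ), A.length = pos + sh →
        Cactus.insertAll (A ++ ξt ++ z) sh ch = A ++ s ++ z) ∧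
      ξt.Nodup ∧ (∀ x ∈ ξt, x ∈ s) ∧ ξt.head? = s.head? ∧ ξt.getLast? = s.getLast? ∧
      ξt.Chain' H.Adj ∧
      (∀ kc ∈ ch, CValid H kc.2) ∧
      (∀ kc ∈ ch, pos ≤ kc.1 ∧ kc.1 < pos + ξt.length) ∧
      List.Chain' (· ≤ ·) (ch.map Prod.fst) ∧
      (∀ kc ∈ ch, kc.2.root = ξt[kc.1 - pos]?) ∧
      (∀ kc ∈ ch, kc.2.depth ≤ s.toFinset.card) := by
  intro m
  induction m with
  | zero =>
    intro s pos h0 _ _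
    have hs : s = [] := List.length_eq_zero_iff.mp (Nat.le_zero.mp h0)
    subst hs
    refine ⟨[], [], ?_, by simp [List.Chain'], by simp [List.Chain'], rfl, rfl, by simp [List.Chain'], by simp [List.Chain'], by simp [List.Chain'], by simp [List.Chain'], by simp [List.Chain'], by simp [List.Chain']⟩
    intro A z sh _
    rw [insertAll_nil]
  | succ m ih =>
    intro s pos hm hn hch
    cases s with
    | nil =>
      refine ⟨[], [], ?_, by simp [List.Chain'], by simp [List.Chain'], rfl, rfl, by simp [List.Chain'], by simp [List.Chain'], by simp [List.Chain'], by simp [List.Chain'], by simp [List.Chain'], by simp [List.Chain']⟩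
      intro A z sh _
      rw [insertAll_nil]
    | cons u s' =>
      simp only [List.length_cons] at hm hn
      obtain ⟨L, r, hs, hLne, hLlast, hur⟩ := lastSplit u (u :: s') (by simp)
      have hLhead : L.head? = some u := by
        have hh := congrArg List.head? hs
        cases L with
        | nil => exact absurd rfl hLne
        | cons a L' => simpa using hh.symm
      have hchain : List.Chain' H.Adj (L ++ r) := hs ▸ hch
      obtain ⟨hcL, hcr, hjunc⟩ := List.isChain_append.mp hchain
      have hLcyc : IsCycleL H L := ⟨⟨hLne, hcL⟩, by rw [hLhead, hLlast]⟩
      have hlens := congrArg List.length hs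
      simp only [List.length_cons, List.length_append] at hlens
      have hL1 : 1 ≤ L.length := List.length_pos_iff.mpr hLne
      have hLlen : L.length ≤ n := by omega
      obtain ⟨F, hFne, hFval, hFroot, hFhl, hFenc, hFdep⟩ := hIH L hLlen hLcyc
      have hFh : ∀ C ∈ F, (Cactus.encode C).head? = some u := by
        intro C hC; rw [(hFhl C hC).1, hLhead]
      have hFl : ∀ C ∈ F, (Cactus.encode C).getLast? = some u := by
        intro C hC; rw [(hFhl C hC).2, hLhead]
      obtain ⟨ξt', ch', hg1, hg2, hg3, hg4, hg5, hg6, hg7, hg8, hg9, hg10, hg11⟩ :=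
        ih r (pos + 1) (by omega) (by omega) hcr
      have hsubL : L.toFinset ⊆ (u :: s').toFinset := by
        intro x hx
        rw [List.mem_toFinset] at hx ⊢
        rw [hs]; exact List.mem_append_left r hx
      have hsubr : r.toFinset ⊆ (u :: s').toFinset := by
        intro x hx
        rw [List.mem_toFinset] at hx ⊢
        rw [hs]; exact List.mem_append_right L hx
      refine ⟨u :: ξt', F.map (fun C => (pos, C)) ++ ch', ?_, ?_, ?_, rfl, ?_, ?_, ?_, ?_, ?_, ?_, ?_⟩
      · -- insertion equation
        intro A z sh hA
        have e1 : A ++ (u :: ξt') ++ z = A ++ u :: (ξt' ++ z) := by simp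
        rw [e1, ins_forest u F hFne hFh hFl ch' A (ξt' ++ z) pos sh hA, hFenc]
        have e2 : A ++ L ++ (ξt' ++ z) = (A ++ L) ++ ξt' ++ z := by simp
        rw [e2, hg1 (A ++ L) z (sh + (L.length - 1)) (by simp; omega)]
        rw [hs]; simp
      · -- nodup
        exact List.nodup_cons.mpr ⟨fun hmem => hur (hg3 u hmem), hg2⟩
      · -- subset
        intro x hx
        rcases List.mem_cons.mp hx with rfl | h'
        · simp
        · rw [hs]; exact List.mem_append_right L (hg3 x h')
      · -- getLast?
        by_cases hr : r = []
        · subst hr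
          have hξnil : ξt' = [] := head?_eq_nil' (by rw [hg4]; rfl)
          subst hξnil
          simp only [List.append_nil] at hs
          rw [← hs] at hLlast
          simpa using hLlast.symm
        · have hξne : ξt' ≠ [] := by
            intro h
            rw [h] at hg4
            exact hr (head?_eq_nil' hg4.symm)
          rw [getLast?_cons' u ξt' hξne, hg5, hs, getLast?_append' L r hr]
      · -- chain'
        refine List.isChain_cons.mpr ⟨?_, hg6⟩
        intro y hy
        rw [hg4] at hy
        exact hjunc u (by simp [hLlast]) y hy
      · -- validity
        intro kc hkc
        rcases List.mem_append.mp hkc with h' | h'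
        · obtain ⟨C, hC, rfl⟩ := List.mem_map.mp h'
          exact hFval C hC
        · exact hg7 kc h'
      · -- range
        intro kc hkc
        rcases List.mem_append.mp hkc with h' | h'
        · obtain ⟨C, hC, rfl⟩ := List.mem_map.mp h'
          simp
        · have := hg8 kc h'
          simp only [List.length_cons]
          omega
      · -- monotone
        simp only [List.map_append, List.map_map]
        have hconst : (List.map (Prod.fst ∘ fun C => (pos, C)) F) = F.map (fun _ => pos) := by
          simp [Function.comp]
        rw [hconst]
        refine List.isChain_append.mpr ⟨chain'_le_const pos F, hg9, ?_⟩
        intro x hx y hy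
        have hx' : x ∈ F.map (fun _ => pos) := mem_of_getLast?' hx
        have hxpos : x = pos := by
          obtain ⟨C, _, h⟩ := List.mem_map.mp hx'
          exact h.symm
        have hy' : y ∈ ch'.map Prod.fst := List.mem_of_mem_head? hy
        obtain ⟨kc, hkc, rfl⟩ := List.mem_map.mp hy'
        have := (hg8 kc hkc).1
        omega
      · -- roots
        intro kc hkc
        rcases List.mem_append.mp hkc with h' | h'
        · obtain ⟨C, hC, rfl⟩ := List.mem_map.mp h'
          simp only [Nat.sub_self]
          rw [hFroot C hC, hLhead]
          rfl
        · have hkpos := (hg8 kc h').1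
          have : kc.1 - pos = (kc.1 - (pos + 1)) + 1 := by omega
          rw [this, List.getElem?_cons_succ]
          exact hg10 kc h'
      · -- depth
        intro kc hkc
        rcases List.mem_append.mp hkc with h' | h'
        · obtain ⟨C, hC, rfl⟩ := List.mem_map.mp h'
          exact le_trans (hFdep C hC) (Finset.card_le_card hsubL)
        · exact le_trans (hg11 kc h') (Finset.card_le_card hsubr)

end Core
section Core2

variable {V : Type*}

lemma bLemma (H : LGraph V) [DecidableEq V] (n : ℕ)
    (hIH : ∀ c : List V, c.length ≤ n → IsCycleL H c → MainProp H c)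
    (v : V) (a : List V) (hva : v ∉ a) (hch : List.Chain' H.Adj (v :: a ++ [v]))
    (hlen : a.length ≤ n) :
    ∃ C : Cactus V, CValid H C ∧ C.root = some v ∧ Cactus.encode C = v :: a ++ [v] ∧
      C.depth ≤ (v :: a ++ [v]).toFinset.card := by
  obtain ⟨hhead, htail⟩ := List.isChain_cons.mp hch
  obtain ⟨hca, _, hjun⟩ := List.isChain_append.mp htail
  obtain ⟨ξt, ch, hg1, hg2, hg3, hg4, hg5, hg6, hg7, hg8, hg9, hg10, hg11⟩ :=
    gLemma H n hIH a.length a 1 le_rfl hlen hca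
  refine ⟨Cactus.mk (v :: ξt ++ [v]) ch, ?_, ?_, ?_, ?_⟩
  · -- validity
    have hξchain : List.Chain' H.Adj (v :: ξt ++ [v]) := by
      refine List.isChain_cons.mpr ⟨?_, ?_⟩
      · intro y hy
        apply hhead
        have hhd : (ξt ++ [v]).head? = (a ++ [v]).head? := by
          have h4 := hg4
          cases hx : ξt with
          | nil =>
            rw [hx] at h4
            have ha : a = [] := head?_eq_nil' h4.symm
            subst ha; rfl
          | cons w ξs =>
            rw [hx] at h4
            cases a with
            | nil => simp at h4
            | cons b as =>
              simp only [List.head?_cons] at h4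
              simpa using h4
        have hy' : y ∈ (ξt ++ [v]).head? := hy
        rw [hhd] at hy'
        exact hy'
      · refine List.isChain_append.mpr ⟨hg6, by simp, ?_⟩
        intro x hx y hy
        simp only [List.head?_cons, Option.mem_def, Option.some_inj] at hy
        subst hy
        exact hjun x (by rwa [hg5] at hx) v rfl
    have hξlast : (v :: ξt ++ [v]).getLast? = some v := by
      have : v :: ξt ++ [v] = (v :: ξt) ++ [v] := by simp
      rw [this, List.getLast?_concat]
    have hξcyc : IsCycleL H (v :: ξt ++ [v]) :=
      ⟨⟨by simp, hξchain⟩, by rw [hξlast]; rfl⟩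
    refine CValid.mk _ _ (simple_mk H v ξt hg2 (fun hm => hva (hg3 v hm)) hξcyc) hg9 ?_ ?_ hg7
    · intro kc hkc
      have := (hg8 kc hkc).2
      simp only [List.length_cons, List.length_append, List.length_singleton]
      omega
    · intro kc hkc
      obtain ⟨h1, h2⟩ := hg8 kc hkc
      rw [xi_get? v ξt kc.1 h1 (by omega)]
      exact hg10 kc hkc
  · rfl
  · rw [encode_mk]
    have := hg1 [v] [v] 0 (by simp)
    simpa using this
  · rw [depth_mk]
    have hd := depthList_le a.toFinset.card ch hg11
    have htf : (v :: a ++ [v]).toFinset = insert v a.toFinset := by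
      ext x; simp
    rw [htf, Finset.card_insert_of_notMem (by simpa using hva)]
    omega

lemma piecesLemma (H : LGraph V) [DecidableEq V] (n : ℕ)
    (hIH : ∀ c : List V, c.length ≤ n → IsCycleL H c → MainProp H c) (v : V) :
    ∀ (m : ℕ) (t : List V), t.length ≤ m → t.length ≤ n → t ≠ [] → t.getLast? = some v →
    List.Chain' H.Adj (v :: t) → MainProp H (v :: t) := by
  intro m
  induction m with
  | zero =>
    intro t h0 _ hne _ _
    exact absurd (List.length_eq_zero_iff.mp (Nat.le_zero.mp h0)) hne
  | succ m ih =>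
    intro t hm hn hne hlast hch
    obtain ⟨a, t₂, rfl, hva⟩ := firstSplit v t (mem_of_getLast?' hlast)
    have e : v :: (a ++ v :: t₂) = (v :: a) ++ (v :: t₂) := by simp
    rw [e] at hch
    obtain ⟨hc1, hc2, hjun⟩ := List.isChain_append.mp hch
    have hchA : List.Chain' H.Adj (v :: a ++ [v]) := by
      refine List.isChain_append.mpr ⟨hc1, by simp, ?_⟩
      intro x hx y hy
      simp only [List.head?_cons, Option.mem_def, Option.some_inj] at hy
      subst hy
      exact hjun x hx v rfl
    have hlens : a.length + t₂.length + 1 = (a ++ v :: t₂).length := by simp; omega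
    obtain ⟨C, hCval, hCroot, hCenc, hCdep⟩ :=
      bLemma H n hIH v a hva hchA (by omega)
    have hCencne : Cactus.encode C ≠ [] := by rw [hCenc]; simp
    have hCenchead : (Cactus.encode C).head? = some v := by rw [hCenc]; rfl
    have hCenclast : (Cactus.encode C).getLast? = some v := by
      rw [hCenc]
      have : v :: a ++ [v] = (v :: a) ++ [v] := by simp
      rw [this, List.getLast?_concat]
    by_cases ht₂ : t₂ = []
    · subst ht₂
      refine ⟨[C], by simp, by simpa using hCval, by simpa using hCroot, ?_, ?_, ?_⟩
      · intro D hD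
        simp only [List.mem_singleton] at hD
        subst hD
        exact ⟨hCenchead, hCenclast⟩
      · show forestEncode [Cactus.encode C] = _
        show Cactus.encode C = _
        rw [hCenc]
        simp
      · intro D hD
        simp only [List.mem_singleton] at hD
        subst hD
        exact hCdep
    · have hlast₂ : t₂.getLast? = some v := by
        rw [getLast?_append' a _ (by simp), getLast?_cons' v t₂ ht₂] at hlast
        exact hlast
      obtain ⟨F', hF'ne, hF'val, hF'root, hF'hl, hF'enc, hF'dep⟩ :=
        ih t₂ (by omega) (by omega) ht₂ hlast₂ hc2
      have hF'encne : ∀ q ∈ F'.map Cactus.encode, q ≠ [] := by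
        intro q hq
        obtain ⟨D, hD, rfl⟩ := List.mem_map.mp hq
        intro h
        have := (hF'hl D hD).1
        rw [h] at this
        simp at this
      have hsub1 : (v :: a ++ [v]).toFinset ⊆ (v :: (a ++ v :: t₂)).toFinset := by
        intro x hx
        rw [List.mem_toFinset] at hx ⊢
        simp at hx ⊢
        tauto
      have hsub2 : (v :: t₂).toFinset ⊆ (v :: (a ++ v :: t₂)).toFinset := by
        intro x hx
        rw [List.mem_toFinset] at hx ⊢
        simp at hx ⊢
        tauto
      refine ⟨C :: F', by simp, ?_, ?_, ?_, ?_, ?_⟩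
      · intro D hD
        rcases List.mem_cons.mp hD with rfl | h'
        · exact hCval
        · exact hF'val D h'
      · intro D hD
        rcases List.mem_cons.mp hD with rfl | h'
        · exact hCroot
        · rw [hF'root D h']; rfl
      · intro D hD
        rcases List.mem_cons.mp hD with rfl | h'
        · exact ⟨hCenchead, hCenclast⟩
        · exact hF'hl D h'
      · rw [List.map_cons, forestEncode_cons _ _ hCencne hF'encne, hF'enc, hCenc]
        show (v :: a ++ [v]) ++ t₂ = _
        simp
      · intro D hD
        rcases List.mem_cons.mp hD with rfl | h'
        · exact le_trans hCdep (Finset.card_le_card hsub1)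
        · exact le_trans (hF'dep D h') (Finset.card_le_card hsub2)

lemma mainLemma (H : LGraph V) [DecidableEq V] :
    ∀ (n : ℕ) (c : List V), c.length ≤ n → IsCycleL H c → MainProp H c := by
  intro n
  induction n with
  | zero =>
    intro c hl hc
    exact absurd (List.length_eq_zero_iff.mp (Nat.le_zero.mp hl)) hc.1.1
  | succ n ih =>
    intro c hl hc
    obtain ⟨⟨hne, hch⟩, hcyc⟩ := hc
    cases c with
    | nil => exact absurd rfl hne
    | cons v t =>
      cases t with
      | nil =>
        refine ⟨[Cactus.mk [v] []], by simp, ?_, ?_, ?_, ?_, ?_⟩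
        · intro D hD
          simp only [List.mem_singleton] at hD
          subst hD
          refine CValid.mk _ _ ⟨⟨⟨by simp [List.Chain'], by simp [List.Chain']⟩, rfl⟩, ?_⟩ (by simp [List.Chain']) (by simp [List.Chain']) (by simp [List.Chain']) (by simp [List.Chain'])
          intro i j hij hj _
          simp only [List.length_singleton] at hj
          omega
        · intro D hD
          simp only [List.mem_singleton] at hD
          subst hD
          rfl
        · intro D hD
          simp only [List.mem_singleton] at hD
          subst hD
          constructor <;> rw [encode_mk, insertAll_nil] <;> rfl
        · show forestEncode [Cactus.encode (Cactus.mk [v] [])] = _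
          show Cactus.encode (Cactus.mk [v] []) = _
          rw [encode_mk, insertAll_nil]
        · intro D hD
          simp only [List.mem_singleton] at hD
          subst hD
          rw [depth_mk, depthList_nil]
          simp
      | cons x t' =>
        have hlast : (x :: t').getLast? = some v := by
          rw [getLast?_cons' v (x :: t') (by simp)] at hcyc
          exact hcyc.symm
        simp only [List.length_cons] at hl
        exact piecesLemma H n ih v (x :: t').length (x :: t') le_rfl (by simp; omega)
          (by simp) hlast hch

end Core2
/-- Every cycle `c` on a finite connected graph `H` is encoded by a cactus forest
of depth at most `|V_H|` (all of whose root cycles start at the starting vertex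
of `c`). -/
theorem stmt_14 {V : Type*} [Fintype V] (H : LGraph V) (hconn : H.ConnectedL)
    (c : List V) (hc : IsCycleL H c) :
    ∃ F : List (Cactus V), F ≠ [] ∧
      (∀ C ∈ F, CValid H C) ∧
      (∀ C ∈ F, Cactus.root C = c.head?) ∧
      forestEncode (F.map Cactus.encode) = c ∧
      (∀ C ∈ F, Cactus.depth C ≤ Fintype.card V) := by
  letI := Classical.decEq V
  obtain ⟨F, hne, hval, hroot, _, henc, hdep⟩ := mainLemma H c.length c le_rfl hc
  refine ⟨F, hne, hval, hroot, henc, ?_⟩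
  intro C hC
  refine le_trans (hdep C hC) ?_
  rw [← Finset.card_univ]
  exact Finset.card_le_univ _
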